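/- Let p1, p2, p3 be vectors in ℝ³ that are not collinear (do not all lie on a common line through the origin) and satisfy p1 + p2 + p3 = 0. Suppose t1, t2, t3 ∈ ℝ³ satisfy ⟨tⱼ, pⱼ⟩ = 0 for j = 1,2,3 and t1 + t2 + t3 = 0. Then there exists a skew-symmetric linear map a : ℝ³ → ℝ³ (i.e. ⟨a v, w⟩ + ⟨v, a w⟩ = 0 for all v, w) such that tⱼ = a(pⱼ) for j = 1,2,3. -/

import Mathlib

open scoped InnerProductSpace

/-- Infinitesimal rigidity of a triangle. -/
theorem triangle_rigidity
    (p₁ p₂ p₃ t₁ t₂ t₃ : EuclideanSpace ℝ (Fin 3))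
    (hcol : ¬ ∃ v : EuclideanSpace ℝ (Fin 3),
      (∃ c : ℝ, p₁ = c • v) ∧ (∃ c : ℝ, p₂ = c • v) ∧ (∃ c : ℝ, p₃ = c • v))
    (hsum : p₁ + p₂ + p₃ = 0)
    (ht₁ : ⟪t₁, p₁⟫_ℝ = 0) (ht₂ : ⟪t₂, p₂⟫_ℝ = 0) (ht₃ : ⟪t₃, p₃⟫_ℝ = 0)
    (htsum : t₁ + t₂ + t₃ = 0) :
    ∃ a : EuclideanSpace ℝ (Fin 3) →ₗ[ℝ] EuclideanSpace ℝ (Fin 3),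
      (∀ v w : EuclideanSpace ℝ (Fin 3), ⟪a v, w⟫_ℝ + ⟪v, a w⟫_ℝ = 0) ∧
      a p₁ = t₁ ∧ a p₂ = t₂ ∧ a p₃ = t₃ := by
  have hp₃ : p₃ = -p₁ - p₂ := by
    have := hsum; rw [show p₁ + p₂ + p₃ = (p₃ - (-p₁ - p₂)) + 0 by module] at this
    rw [add_zero] at this; exact sub_eq_zero.mp this
  have ht₃' : t₃ = -t₁ - t₂ := by
    have := htsum; rw [show t₁ + t₂ + t₃ = (t₃ - (-t₁ - t₂)) + 0 by module] at this
    rw [add_zero] at this; exact sub_eq_zero.mp this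
  have hc : ⟪t₁, p₂⟫_ℝ + ⟪t₂, p₁⟫_ℝ = 0 := by
    have h := ht₃
    rw [hp₃, ht₃'] at h
    simp only [inner_sub_left, inner_sub_right, inner_neg_left, inner_neg_right] at h
    linarith [h, ht₁, ht₂]
  have hli2 : LinearIndependent ℝ ![p₁, p₂] := by
    rw [linearIndependent_fin2]
    constructor
    · intro h
      simp only [Matrix.cons_val_one, Matrix.head_cons, Matrix.cons_val_zero] at h
      exact hcol ⟨p₁, ⟨1, (one_smul _ _).symm⟩, ⟨0, by simp [h]⟩,
        ⟨-1, by rw [hp₃, h]; module⟩⟩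
    · intro a h
      simp only [Matrix.cons_val_one, Matrix.head_cons, Matrix.cons_val_zero] at h
      exact hcol ⟨p₂, ⟨a, h.symm⟩, ⟨1, (one_smul _ _).symm⟩,
        ⟨-a - 1, by rw [hp₃, ← h]; module⟩⟩
  set K : Submodule ℝ (EuclideanSpace ℝ (Fin 3)) := Submodule.span ℝ {p₁, p₂} with hK
  have hrange : Set.range ![p₁, p₂] = {p₁, p₂} := by
    ext x
    simp [Fin.exists_fin_two]
    tauto
  have hKrank : Module.finrank ℝ K = 2 := by
    have h := finrank_span_eq_card hli2
    rw [hrange] at h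
    rw [h]; simp
  have hKorth : Module.finrank ℝ Kᗮ = 1 := by
    have h := Submodule.finrank_add_finrank_orthogonal K
    rw [hKrank, finrank_euclideanSpace_fin] at h
    omega
  obtain ⟨n, hnK, hn0⟩ : ∃ n, n ∈ Kᗮ ∧ n ≠ 0 :=
    Submodule.exists_mem_ne_zero_of_ne_bot
      (by intro h; rw [h] at hKorth; simp at hKorth)
  have hnp₁ : ⟪n, p₁⟫_ℝ = 0 := by
    rw [real_inner_comm]
    exact hnK p₁ (Submodule.subset_span (by simp))
  have hnp₂ : ⟪n, p₂⟫_ℝ = 0 := by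
    rw [real_inner_comm]
    exact hnK p₂ (Submodule.subset_span (by simp))
  have hli3 : LinearIndependent ℝ ![n, p₁, p₂] := by
    rw [show (![n, p₁, p₂] : Fin 3 → EuclideanSpace ℝ (Fin 3)) = Fin.cons n ![p₁, p₂] from rfl,
      linearIndependent_fin_cons]
    refine ⟨hli2, fun hmem => hn0 ?_⟩
    rw [hrange] at hmem
    exact inner_self_eq_zero.mp (hnK n hmem)
  have hcard : Fintype.card (Fin 3) = Module.finrank ℝ (EuclideanSpace ℝ (Fin 3)) := by simp
  set b : Module.Basis (Fin 3) ℝ (EuclideanSpace ℝ (Fin 3)) :=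
    basisOfLinearIndependentOfCardEqFinrank hli3 hcard with hb
  have hb0 : b 0 = n := by rw [hb, coe_basisOfLinearIndependentOfCardEqFinrank]; rfl
  have hb1 : b 1 = p₁ := by rw [hb, coe_basisOfLinearIndependentOfCardEqFinrank]; rfl
  have hb2 : b 2 = p₂ := by rw [hb, coe_basisOfLinearIndependentOfCardEqFinrank]; rfl
  set f : StrongDual ℝ (EuclideanSpace ℝ (Fin 3)) :=
    LinearMap.toContinuousLinearMap (b.constr ℝ ![0, -⟪t₁, n⟫_ℝ, -⟪t₂, n⟫_ℝ]) with hf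
  set s : EuclideanSpace ℝ (Fin 3) := (InnerProductSpace.toDual ℝ _).symm f with hs
  have hsv : ∀ v, ⟪s, v⟫_ℝ = b.constr ℝ ![0, -⟪t₁, n⟫_ℝ, -⟪t₂, n⟫_ℝ] v := by
    intro v
    rw [hs, InnerProductSpace.toDual_symm_apply, hf]
    rfl
  have hsn : ⟪s, n⟫_ℝ = 0 := by
    rw [hsv, ← hb0, Module.Basis.constr_basis]; rfl
  have hsp₁ : ⟪s, p₁⟫_ℝ = -⟪t₁, n⟫_ℝ := by
    rw [hsv, ← hb1, Module.Basis.constr_basis]; rfl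
  have hsp₂ : ⟪s, p₂⟫_ℝ = -⟪t₂, n⟫_ℝ := by
    rw [hsv, ← hb2, Module.Basis.constr_basis]; rfl
  set a : EuclideanSpace ℝ (Fin 3) →ₗ[ℝ] EuclideanSpace ℝ (Fin 3) :=
    b.constr ℝ ![s, t₁, t₂] with ha
  have han : a n = s := by rw [ha, ← hb0, Module.Basis.constr_basis]; rfl
  have hap₁ : a p₁ = t₁ := by rw [ha, ← hb1, Module.Basis.constr_basis]; rfl
  have hap₂ : a p₂ = t₂ := by rw [ha, ← hb2, Module.Basis.constr_basis]; rfl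
  have hb0' : b ⟨0, by norm_num⟩ = n := hb0
  have hb1' : b ⟨1, by norm_num⟩ = p₁ := hb1
  have hb2' : b ⟨2, by norm_num⟩ = p₂ := hb2
  have hadj : -a = LinearMap.adjoint a := by
    rw [LinearMap.eq_adjoint_iff_basis b b]
    intro i j
    fin_cases i <;> fin_cases j <;>
      rw [LinearMap.neg_apply, inner_neg_left] <;>
      simp only [hb0', hb1', hb2', han, hap₁, hap₂] <;>
      linarith [hsn, hsp₁, hsp₂, ht₁, ht₂, hc, real_inner_comm n s, real_inner_comm n t₁,
        real_inner_comm n t₂, real_inner_comm p₁ s, real_inner_comm p₁ t₁, real_inner_comm p₁ t₂,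
        real_inner_comm p₂ s, real_inner_comm p₂ t₁, real_inner_comm p₂ t₂]
  refine ⟨a, ?_, hap₁, hap₂, ?_⟩
  · intro v w
    have h1 : ⟪v, a w⟫_ℝ = ⟪LinearMap.adjoint a v, w⟫_ℝ :=
      (LinearMap.adjoint_inner_left a w v).symm
    rw [h1, ← hadj, LinearMap.neg_apply, inner_neg_left]
    ring
  · rw [hp₃, ht₃']
    rw [map_sub, map_neg, hap₁, hap₂]
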